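/- Suppose the reverse model satisfies Pr(x) = PS(x) for all x (zero reverse-validation error) and γ + δ ≠ 1, with Pr = (1-α-β)·Pφ + α·PS + β·PT and Pφ = (1-γ-δ)·PS + γ·PT + δ·PT'. If additionally C₁ ≠ 0 and PT = PT' (intermediate and target share the conditional distribution), then Pφ(x) = PT'(x) for all x, where C₁ = (1-α-β)(1-γ-δ) - (1-α). -/
import Mathlib

theorem stmt_17 {X : Type*} (PS PT PT' Pphi Pr : X → ℝ) (α β γ δ : ℝ)
    (hγδ : γ + δ ≠ 1)
    (hPphi : ∀ x, Pphi x = (1 - γ - δ) * PS x + γ * PT x + δ * PT' x)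
    (hPr : ∀ x, Pr x = (1 - α - β) * Pphi x + α * PS x + β * PT x)
    (hRV : ∀ x, Pr x = PS x)
    (hC₁ : (1 - α - β) * (1 - γ - δ) - (1 - α) ≠ 0)
    (hTT' : PT = PT') :
    ∀ x, Pphi x = PT' x := by
  intro x
  have h1 := hPphi x
  have h2 := hPr x
  have h3 := hRV x
  subst hTT'
  have hS : PS x = PT x := by
    have := hC₁
    apply mul_left_cancel₀ this
    linear_combination h3 - h2 - (1 - α - β) * h1
  rw [h1, hS]; ring
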